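/- arXiv:2305.18062 — 3 statements merged into one kernel-verified Lean document; each statement's English description precedes it below -/
import Mathlib

section
/- There exists an absolute constant C > 0 such that the following holds. Let d, σ > 0, let u > d, let (ξ_i)_{i≥1} be an i.i.d. sequence of standard Gaussian N(0,1) random variables, and define the random walk Y_m = u − d·m + σ·Σ_{i=1}^m ξ_i for m ≥ 0. Let S = inf{m ≥ 1 : Y_m ≤ d} (which is finite almost surely). Then for every a ≤ −d, P(Y_S < a) ≤ C · e^{−a²/(2σ²)}. -/
open MeasureTheory ProbabilityTheory
open MeasureTheory ProbabilityTheory Real Filter Topology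
open scoped ENNReal NNReal

lemma pdf_one_eq (μ x : ℝ) :
    gaussianPDFReal μ 1 x = (Real.sqrt (2*π))⁻¹ * Real.exp (-(x-μ)^2/2) := by
  simp [gaussianPDFReal]

lemma gauss_tail (t : ℝ) (ht : 0 ≤ t) :
    gaussianReal 0 1 (Set.Iio (-t)) ≤ ENNReal.ofReal (Real.exp (-t^2/2)) := by
  rw [gaussianReal_apply 0 one_ne_zero]
  have key : ∀ x ∈ Set.Iio (-t),
      gaussianPDF 0 1 x ≤ ENNReal.ofReal (Real.exp (-t^2/2)) * gaussianPDF (-t) 1 x := by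
    intro x hx
    simp only [Set.mem_Iio] at hx
    simp only [gaussianPDF, ← ENNReal.ofReal_mul (Real.exp_nonneg _)]
    apply ENNReal.ofReal_le_ofReal
    rw [pdf_one_eq, pdf_one_eq, mul_comm (Real.exp (-t^2/2)), mul_assoc]
    apply mul_le_mul_of_nonneg_left _ (by positivity)
    rw [← Real.exp_add]
    apply Real.exp_le_exp.2
    have h1 : x + t ≤ 0 := by linarith
    nlinarith [mul_nonneg ht (neg_nonneg.2 h1)]
  calc ∫⁻ x in Set.Iio (-t), gaussianPDF 0 1 x
      ≤ ∫⁻ x in Set.Iio (-t), ENNReal.ofReal (Real.exp (-t^2/2)) * gaussianPDF (-t) 1 x :=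
        setLIntegral_mono ((measurable_gaussianPDF _ _).const_mul _) key
    _ ≤ ∫⁻ x, ENNReal.ofReal (Real.exp (-t^2/2)) * gaussianPDF (-t) 1 x :=
        setLIntegral_le_lintegral _ _
    _ = ENNReal.ofReal (Real.exp (-t^2/2)) * ∫⁻ x, gaussianPDF (-t) 1 x :=
        lintegral_const_mul _ (measurable_gaussianPDF _ _)
    _ = ENNReal.ofReal (Real.exp (-t^2/2)) := by
        rw [lintegral_gaussianPDF_eq_one _ one_ne_zero, mul_one]

lemma gauss_low : ENNReal.ofReal (1/25) ≤ gaussianReal 0 1 (Set.Iio (-1)) := by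
  rw [gaussianReal_apply 0 one_ne_zero]
  have hsq : (0:ℝ) < Real.sqrt (2 * π) := by
    apply Real.sqrt_pos.2; positivity
  have hpi : Real.sqrt (2 * π) ≤ 3 := by
    rw [show (3:ℝ) = Real.sqrt 9 by
      rw [show (9:ℝ) = 3^2 by norm_num, Real.sqrt_sq]; norm_num]
    apply Real.sqrt_le_sqrt
    nlinarith [Real.pi_lt_d2]
  have key : ∀ x ∈ Set.Ioo (-2 : ℝ) (-1), ENNReal.ofReal (1/25) ≤ gaussianPDF 0 1 x := by
    intro x hx
    obtain ⟨h1, h2⟩ := hx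
    apply ENNReal.ofReal_le_ofReal
    rw [pdf_one_eq]
    have he : Real.exp (-(2:ℝ)) ≤ Real.exp (-(x - 0)^2 / 2) := by
      apply Real.exp_le_exp.2
      nlinarith
    have h3 : Real.exp 1 ≤ 2.7182818286 := Real.exp_one_lt_d9.le
    have h4 : (0:ℝ) < Real.exp 1 := Real.exp_pos 1
    have he2 : (1:ℝ)/25 ≤ (Real.sqrt (2*π))⁻¹ * Real.exp (-(2:ℝ)) := by
      have hv : Real.exp (-(2:ℝ)) = (Real.exp 1 ^ 2)⁻¹ := by
        rw [← Real.exp_nat_mul, ← Real.exp_neg]; norm_num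
      rw [hv, ← mul_inv]
      rw [div_eq_mul_inv, one_mul]
      apply inv_anti₀
      · positivity
      · nlinarith
    calc (1:ℝ)/25 ≤ (Real.sqrt (2*π))⁻¹ * Real.exp (-(2:ℝ)) := he2
      _ ≤ (Real.sqrt (2*π))⁻¹ * Real.exp (-(x - 0)^2 / 2) :=
          mul_le_mul_of_nonneg_left he (by positivity)
  calc ENNReal.ofReal (1/25)
      = ENNReal.ofReal (1/25) * volume (Set.Ioo (-2:ℝ) (-1)) := by
        rw [Real.volume_Ioo]; norm_num
    _ = ∫⁻ _x in Set.Ioo (-2:ℝ) (-1), ENNReal.ofReal (1/25) := by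
        rw [setLIntegral_const]
    _ ≤ ∫⁻ x in Set.Ioo (-2:ℝ) (-1), gaussianPDF 0 1 x :=
        setLIntegral_mono (measurable_gaussianPDF _ _) key
    _ ≤ ∫⁻ x in Set.Iio (-1:ℝ), gaussianPDF 0 1 x := by
        apply lintegral_mono_set
        intro x hx; exact hx.2


lemma pdf_one_eq' (μ x : ℝ) :
    gaussianPDFReal μ 1 x = (Real.sqrt (2*π))⁻¹ * Real.exp (-(x-μ)^2/2) := by
  simp [gaussianPDFReal]

lemma gauss_den : gaussianReal 0 1
    = volume.withDensity (fun x => ((gaussianPDFReal 0 1 x).toNNReal : ℝ≥0∞)) := by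
  rw [gaussianReal_of_var_ne_zero 0 one_ne_zero]
  rfl

lemma integrable_mul_pdf : Integrable (fun x : ℝ => (gaussianPDFReal 0 1 x).toNNReal • x) volume := by
  have h : Integrable (fun x : ℝ => x * Real.exp (-(1/2) * x^2)) volume :=
    integrable_mul_exp_neg_mul_sq (by norm_num)
  have h2 := h.const_mul (Real.sqrt (2*π))⁻¹
  have heq : (fun x : ℝ => (Real.sqrt (2*π))⁻¹ * (x * Real.exp (-(1/2) * x^2)))
      = fun x : ℝ => (gaussianPDFReal 0 1 x).toNNReal • x := by
    funext x
    rw [NNReal.smul_def, Real.coe_toNNReal _ (gaussianPDFReal_nonneg _ _ _)]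
    rw [pdf_one_eq']
    rw [smul_eq_mul]
    rw [show (-(x-0)^2/2 : ℝ) = -(1/2) * x^2 by ring]
    ring
  rw [← heq]
  exact h2

lemma gauss_integrable_id : Integrable (fun x : ℝ => x) (gaussianReal 0 1) := by
  rw [gauss_den]
  exact (integrable_withDensity_iff_integrable_smul
    ((measurable_gaussianPDFReal 0 1).real_toNNReal)).mpr integrable_mul_pdf

lemma gauss_integral_id : ∫ x, x ∂(gaussianReal 0 1) = 0 := by
  rw [gauss_den, integral_withDensity_eq_integral_smul
    ((measurable_gaussianPDFReal 0 1).real_toNNReal) _]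
  set f : ℝ → ℝ := fun x => (gaussianPDFReal 0 1 x).toNNReal • x with hf
  have hodd : ∀ x, f (-x) = - f x := by
    intro x
    simp only [hf, NNReal.smul_def, smul_eq_mul]
    rw [show gaussianPDFReal 0 1 (-x) = gaussianPDFReal 0 1 x by
      rw [pdf_one_eq', pdf_one_eq']
      rw [show (-(-x-0)^2/2 : ℝ) = -(x-0)^2/2 by ring]]
    push_cast
    ring
  have h1 : ∫ x, f (-x) = ∫ x, f x := integral_neg_eq_self f volume
  rw [show (fun x => f (-x)) = fun x => - f x from funext hodd] at h1
  rw [integral_neg] at h1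
  linarith

noncomputable def Cfun (k : ℕ) : ℝ := ((k:ℝ)+1) * 25^(k+1) * Real.exp (-(k:ℝ)^2/2)

lemma Cfun_nonneg (k : ℕ) : 0 ≤ Cfun k := by
  unfold Cfun; positivity

lemma Cfun_summable : Summable Cfun := by
  apply summable_of_ratio_norm_eventually_le (r := 1/2) (by norm_num)
  filter_upwards [eventually_ge_atTop 20] with n hn
  rw [Real.norm_of_nonneg (Cfun_nonneg _), Real.norm_of_nonneg (Cfun_nonneg _)]
  have hn' : (20:ℝ) ≤ (n:ℝ) := by exact_mod_cast hn
  have hgrow : (1 + (n:ℝ)/2)^2 ≤ Real.exp ((n:ℝ)+1/2) := by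
    have h1 : (1 + (n:ℝ)/2) ≤ Real.exp ((n:ℝ)/2) := by
      have := Real.add_one_le_exp ((n:ℝ)/2)
      linarith
    calc (1 + (n:ℝ)/2)^2 ≤ Real.exp ((n:ℝ)/2)^2 := by
          apply pow_le_pow_left₀ (by positivity) h1
      _ = Real.exp ((n:ℝ)/2 + (n:ℝ)/2) := by rw [Real.exp_add]; ring
      _ ≤ Real.exp ((n:ℝ)+1/2) := Real.exp_le_exp.2 (by linarith)
  set E := Real.exp (-(n:ℝ)-1/2) with hE_def
  have hEpos : 0 < E := Real.exp_pos _
  have hE1 : E * (1 + (n:ℝ)/2)^2 ≤ 1 := by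
    calc E * (1 + (n:ℝ)/2)^2 ≤ E * Real.exp ((n:ℝ)+1/2) := by
          apply mul_le_mul_of_nonneg_left hgrow hEpos.le
      _ = 1 := by rw [hE_def, ← Real.exp_add]; norm_num
  have h50 : 50*((n:ℝ)+2) ≤ ((n:ℝ)+1)*(1+(n:ℝ)/2)^2 := by nlinarith
  have key : ((n:ℝ)+2) * 25^(n+2) * E ≤ 1/2*(((n:ℝ)+1) * 25^(n+1)) := by
    have hP : (0:ℝ) < 25^(n+1) := by positivity
    have step1 : 50*((n:ℝ)+2)*E ≤ ((n:ℝ)+1) := by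
      calc 50*((n:ℝ)+2)*E ≤ (((n:ℝ)+1)*(1+(n:ℝ)/2)^2)*E := by
            apply mul_le_mul_of_nonneg_right h50 hEpos.le
        _ = ((n:ℝ)+1) * (E * (1+(n:ℝ)/2)^2) := by ring
        _ ≤ ((n:ℝ)+1) * 1 := by
            apply mul_le_mul_of_nonneg_left hE1 (by linarith)
        _ = (n:ℝ)+1 := by ring
    calc ((n:ℝ)+2) * 25^(n+2) * E = (25^(n+1) / 2) * (50*((n:ℝ)+2)*E) := by
          rw [pow_succ]
          ring
      _ ≤ (25^(n+1) / 2) * ((n:ℝ)+1) := by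
          apply mul_le_mul_of_nonneg_left step1 (by positivity)
      _ = 1/2*(((n:ℝ)+1) * 25^(n+1)) := by ring
  have e1 : Cfun (n+1) = (((n:ℝ)+2) * 25^(n+2) * E) * Real.exp (-(n:ℝ)^2/2) := by
    unfold Cfun
    push_cast
    rw [show (-((n:ℝ)+1)^2/2) = (-(n:ℝ)-1/2) + (-(n:ℝ)^2/2) by ring, Real.exp_add]
    rw [show (n:ℕ)+1+1 = (n:ℕ)+2 from rfl]
    push_cast
    ring
  have e2 : 1/2 * Cfun n = (1/2*(((n:ℝ)+1) * 25^(n+1))) * Real.exp (-(n:ℝ)^2/2) := by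
    unfold Cfun; ring
  rw [e1, e2]
  apply mul_le_mul_of_nonneg_right key (Real.exp_pos _).le


section Helpers

variable {Ω : Type} [MeasurableSpace Ω]

lemma B_rep (d σ u : ℝ) (ξ : ℕ → Ω → ℝ) (Y : ℕ → Ω → ℝ)
    (hY : ∀ m ω, Y m ω = u - d * m + σ * ∑ i ∈ Finset.range m, ξ (i + 1) ω)
    (n : ℕ) (s t : ℝ) :
    ∃ A : Set ((Finset.Icc 1 n : Finset ℕ) → ℝ), MeasurableSet A ∧
      {ω | (∀ j, 1 ≤ j → j ≤ n → d < Y j ω) ∧ s ≤ Y n ω - d ∧ Y n ω - d < t}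
        = (fun ω (i : (Finset.Icc 1 n : Finset ℕ)) => ξ i ω) ⁻¹' A := by
  classical
  set ext : ((Finset.Icc 1 n : Finset ℕ) → ℝ) → ℕ → ℝ :=
    fun v i => if h : i ∈ Finset.Icc 1 n then v ⟨i, h⟩ else 0 with hext_def
  have hext : ∀ i, Measurable (fun v : (Finset.Icc 1 n : Finset ℕ) → ℝ => ext v i) := by
    intro i
    by_cases h : i ∈ Finset.Icc 1 n
    · have : (fun v : (Finset.Icc 1 n : Finset ℕ) → ℝ => ext v i)
          = fun v => v ⟨i, h⟩ := by
        funext v; simp only [hext_def]; rw [dif_pos h]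
      rw [this]
      exact measurable_pi_apply _
    · simp only [hext_def, h, dif_neg, not_false_iff]
      exact measurable_const
  set F : ℕ → ((Finset.Icc 1 n : Finset ℕ) → ℝ) → ℝ :=
    fun j v => u - d * j + σ * ∑ i ∈ Finset.range j, ext v (i + 1) with hF_def
  have hF : ∀ j, Measurable (F j) := by
    intro j
    apply Measurable.add
    · exact measurable_const
    · exact (Finset.measurable_sum _ (fun i _ => hext (i + 1))).const_mul σ
  have hYF : ∀ j, j ≤ n → ∀ ω, F j (fun i => ξ i ω) = Y j ω := by
    intro j hj ω
    rw [hY, hF_def]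
    simp only
    congr 1
    congr 1
    apply Finset.sum_congr rfl
    intro i hi
    have hi' : i < j := Finset.mem_range.mp hi
    have hmem : i + 1 ∈ Finset.Icc 1 n := Finset.mem_Icc.mpr ⟨by omega, by omega⟩
    simp only [hext_def]
    rw [dif_pos hmem]
  refine ⟨{v | (∀ j, 1 ≤ j → j ≤ n → d < F j v) ∧ s ≤ F n v - d ∧ F n v - d < t}, ?_, ?_⟩
  · have h1 : ∀ j : ℕ, MeasurableSet {v : (Finset.Icc 1 n : Finset ℕ) → ℝ
        | 1 ≤ j → j ≤ n → d < F j v} := by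
      intro j
      by_cases hc : 1 ≤ j ∧ j ≤ n
      · have e : {v : (Finset.Icc 1 n : Finset ℕ) → ℝ | 1 ≤ j → j ≤ n → d < F j v}
            = F j ⁻¹' Set.Ioi d := by
          ext v; simp [hc.1, hc.2, Set.mem_Ioi]
        rw [e]; exact (hF j) measurableSet_Ioi
      · have e : {v : (Finset.Icc 1 n : Finset ℕ) → ℝ | 1 ≤ j → j ≤ n → d < F j v}
            = Set.univ := by
          ext v
          simp only [Set.mem_setOf_eq, Set.mem_univ, iff_true]
          intro hj1 hj2; exact absurd ⟨hj1, hj2⟩ hc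
        rw [e]; exact MeasurableSet.univ
    rw [Set.setOf_and, Set.setOf_and, Set.setOf_forall]
    refine ((MeasurableSet.iInter h1).inter (MeasurableSet.inter ?_ ?_))
    · exact measurableSet_le measurable_const ((hF n).sub measurable_const)
    · exact measurableSet_lt ((hF n).sub measurable_const) measurable_const
  · ext ω
    simp only [Set.mem_setOf_eq, Set.mem_preimage]
    constructor
    · rintro ⟨hall, h2, h3⟩
      refine ⟨fun j hj1 hj2 => ?_, ?_, ?_⟩
      · rw [hYF j hj2]; exact hall j hj1 hj2
      · rw [hYF n le_rfl]; exact h2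
      · rw [hYF n le_rfl]; exact h3
    · rintro ⟨hall, h2, h3⟩
      refine ⟨fun j hj1 hj2 => ?_, ?_, ?_⟩
      · rw [← hYF j hj2]; exact hall j hj1 hj2
      · rw [← hYF n le_rfl]; exact h2
      · rw [← hYF n le_rfl]; exact h3

lemma iInter_rep (ξ : ℕ → Ω → ℝ) (T : Finset ℕ) (c : ℝ) :
    (⋂ i ∈ T, ξ i ⁻¹' Set.Iio c)
      = (fun ω (i : {x // x ∈ T}) => ξ i ω) ⁻¹'
        {v : {x // x ∈ T} → ℝ | ∀ i : {x // x ∈ T}, v i < c} := by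
  ext ω
  simp only [Set.mem_iInter, Set.mem_preimage, Set.mem_setOf_eq, Set.mem_Iio, Subtype.forall]

lemma iInter_meas (T : Finset ℕ) (c : ℝ) :
    MeasurableSet {v : {x // x ∈ T} → ℝ | ∀ i : {x // x ∈ T}, v i < c} := by
  have : {v : {x // x ∈ T} → ℝ | ∀ i : {x // x ∈ T}, v i < c}
      = ⋂ i : {x // x ∈ T}, (fun v : {x // x ∈ T} → ℝ => v i) ⁻¹' Set.Iio c := by
    ext v; simp [Set.mem_iInter]
  rw [this]
  exact MeasurableSet.iInter (fun i => (measurable_pi_apply i) measurableSet_Iio)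

lemma key_indep {P : Measure Ω}
    (ξ : ℕ → Ω → ℝ) (hm : ∀ i, Measurable (ξ i))
    (hindep : iIndepFun ξ P)
    {n : ℕ} {B : Set Ω} {A : Set ((Finset.Icc 1 n : Finset ℕ) → ℝ)}
    (hA : MeasurableSet A)
    (hBA : B = (fun ω (i : (Finset.Icc 1 n : Finset ℕ)) => ξ i ω) ⁻¹' A)
    (T : Finset ℕ) (hT : ∀ i ∈ T, n < i) (c : ℝ) :
    P (B ∩ ⋂ i ∈ T, ξ i ⁻¹' Set.Iio c) = P B * P (⋂ i ∈ T, ξ i ⁻¹' Set.Iio c) := by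
  have hdisj : Disjoint (Finset.Icc 1 n) T := by
    rw [Finset.disjoint_left]
    intro i hi hiT
    have := Finset.mem_Icc.mp hi
    have := hT i hiT
    omega
  have hind := hindep.indepFun_finset (Finset.Icc 1 n) T hdisj hm
  rw [hBA, iInter_rep]
  exact hind.measure_inter_preimage_eq_mul _ _ hA (iInter_meas T c)

lemma prod_iio {P : Measure Ω}
    (ξ : ℕ → Ω → ℝ)
    (hindep : iIndepFun ξ P)
    (T : Finset ℕ) (c : ℝ) :
    P (⋂ i ∈ T, ξ i ⁻¹' Set.Iio c) = ∏ i ∈ T, P (ξ i ⁻¹' Set.Iio c) :=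
  hindep.meas_biInter (fun i _ => ⟨Set.Iio c, measurableSet_Iio, rfl⟩)

end Helpers


variable {Ω : Type}

def Bev (d σ : ℝ) (Y : ℕ → Ω → ℝ) (n k : ℕ) : Set Ω :=
  {ω | (∀ j, 1 ≤ j → j ≤ n → d < Y j ω) ∧ σ*k ≤ Y n ω - d ∧ Y n ω - d < σ*(k+1)}

def Cev (c : ℝ) (ξ : ℕ → Ω → ℝ) (n k : ℕ) : Set Ω :=
  ⋂ i ∈ Finset.Icc (n+1) (n+1+k), ξ i ⁻¹' Set.Iio c

def Dev (d a : ℝ) (Y : ℕ → Ω → ℝ) (n : ℕ) : Set Ω :=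
  {ω | (∀ j, 1 ≤ j → j ≤ n → d < Y j ω) ∧ Y (n+1) ω < a}

lemma L1 (d a u : ℝ) (hd : 0 < d) (hdu : d < u) (ha : a ≤ -d) (Y : ℕ → Ω → ℝ)
    (hY0 : ∀ ω, Y 0 ω = u) (S : Ω → ℕ)
    (hS : ∀ ω, S ω = sInf {m : ℕ | 1 ≤ m ∧ Y m ω ≤ d}) :
    {ω | Y (S ω) ω < a} ⊆ ⋃ n, Dev d a Y n := by
  intro ω hω
  simp only [Set.mem_setOf_eq] at hω
  by_cases hne : {m : ℕ | 1 ≤ m ∧ Y m ω ≤ d}.Nonempty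
  · have hmem := Nat.sInf_mem hne
    rw [← hS ω] at hmem
    obtain ⟨hS1, _⟩ := hmem
    refine Set.mem_iUnion.2 ⟨S ω - 1, show _ ∧ _ from ⟨?_, ?_⟩⟩
    · intro j hj1 hj2
      have hjlt : j < sInf {m : ℕ | 1 ≤ m ∧ Y m ω ≤ d} := by
        rw [← hS ω]; omega
      have hnot := Nat.notMem_of_lt_sInf hjlt
      simp only [Set.mem_setOf_eq, not_and, not_le] at hnot
      exact hnot hj1
    · have : S ω - 1 + 1 = S ω := by omega
      rw [this]
      exact hω
  · exfalso
    have hS0 : S ω = 0 := by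
      rw [hS ω, Set.not_nonempty_iff_eq_empty.mp hne, Nat.sInf_empty]
    rw [hS0, hY0] at hω
    linarith

lemma L2 (d σ a u : ℝ) (hσ : 0 < σ) (hdu : d < u) (ξ Y : ℕ → Ω → ℝ)
    (hY : ∀ m ω, Y m ω = u - d * m + σ * ∑ i ∈ Finset.range m, ξ (i + 1) ω) (n : ℕ) :
    Dev d a Y n ⊆ ⋃ k : ℕ, (Bev d σ Y n k ∩ ξ (n+1) ⁻¹' Set.Iio (a/σ - k)) := by
  have hY0 : ∀ ω, Y 0 ω = u := by intro ω; rw [hY]; simp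
  have hstep : ∀ m ω, Y (m+1) ω = Y m ω - d + σ * ξ (m+1) ω := by
    intro m ω; rw [hY, hY, Finset.sum_range_succ]; push_cast; ring
  rintro ω ⟨h1, h2⟩
  have hYn : d < Y n ω := by
    rcases n with _ | m
    · rw [hY0]; exact hdu
    · exact h1 (m+1) (by omega) le_rfl
  set x := Y n ω - d with hx
  have hxpos : 0 < x := by simp [hx]; linarith
  set k := ⌊x/σ⌋₊ with hk
  have hk1 : σ*(k:ℝ) ≤ x := by
    have h := Nat.floor_le (le_of_lt (div_pos hxpos hσ))
    rw [← hk] at h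
    calc σ*(k:ℝ) ≤ σ*(x/σ) := by apply mul_le_mul_of_nonneg_left h hσ.le
      _ = x := by field_simp
  have hk2 : x < σ*((k:ℝ)+1) := by
    have h := Nat.lt_floor_add_one (x/σ)
    rw [← hk] at h
    calc x = σ*(x/σ) := by field_simp
      _ < σ*((k:ℝ)+1) := by apply mul_lt_mul_of_pos_left h hσ
  refine Set.mem_iUnion.2 ⟨k, Set.mem_inter (show _ ∧ _ ∧ _ from ⟨h1, hk1, hk2⟩) ?_⟩
  simp only [Set.mem_preimage, Set.mem_Iio]
  have hs := hstep n ω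
  have h3 : ξ (n+1) ω < (a - σ*(k:ℝ))/σ := by
    apply (lt_div_iff₀' hσ).mpr
    linarith
  have h4 : (a - σ*(k:ℝ))/σ = a/σ - (k:ℝ) := by field_simp
  rw [← h4]
  exact h3

section Main

variable [MeasurableSpace Ω] {P : Measure Ω}

lemma L3 (ξ Y : ℕ → Ω → ℝ) (hξm : ∀ i, Measurable (ξ i))
    (hξi : iIndepFun ξ P)
    (hξmap : ∀ i, Measure.map (ξ i) P = gaussianReal 0 1)
    (d σ u : ℝ)
    (hY : ∀ m ω, Y m ω = u - d * m + σ * ∑ i ∈ Finset.range m, ξ (i + 1) ω)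
    (n k : ℕ) (c : ℝ) :
    P (Bev d σ Y n k ∩ ξ (n+1) ⁻¹' Set.Iio c)
      = P (Bev d σ Y n k) * gaussianReal 0 1 (Set.Iio c) := by
  obtain ⟨A, hA, hrep⟩ := B_rep d σ u ξ Y hY n (σ*(k:ℝ)) (σ*((k:ℝ)+1))
  have hB : Bev d σ Y n k
      = (fun ω (i : (Finset.Icc 1 n : Finset ℕ)) => ξ i ω) ⁻¹' A := hrep
  have hsingle : (⋂ i ∈ ({n+1} : Finset ℕ), ξ i ⁻¹' Set.Iio c) = ξ (n+1) ⁻¹' Set.Iio c := by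
    simp
  have h := key_indep ξ hξm hξi hA hB ({n+1} : Finset ℕ)
    (by intro i hi; simp only [Finset.mem_singleton] at hi; omega) c
  rw [hsingle] at h
  rw [h, ← Measure.map_apply (hξm (n+1)) measurableSet_Iio, hξmap]

lemma Bev_meas (ξ Y : ℕ → Ω → ℝ) (hξm : ∀ i, Measurable (ξ i))
    (d σ u : ℝ)
    (hY : ∀ m ω, Y m ω = u - d * m + σ * ∑ i ∈ Finset.range m, ξ (i + 1) ω)
    (n k : ℕ) : MeasurableSet (Bev d σ Y n k) := by
  obtain ⟨A, hA, hrep⟩ := B_rep d σ u ξ Y hY n (σ*(k:ℝ)) (σ*((k:ℝ)+1))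
  have hB : Bev d σ Y n k
      = (fun ω (i : (Finset.Icc 1 n : Finset ℕ)) => ξ i ω) ⁻¹' A := hrep
  rw [hB]
  exact (measurable_pi_lambda (fun ω (i : (Finset.Icc 1 n : Finset ℕ)) => ξ i ω)
    (fun i => hξm i)) hA

lemma L4 (ξ Y : ℕ → Ω → ℝ) (hξm : ∀ i, Measurable (ξ i))
    (hξi : iIndepFun ξ P)
    (hξmap : ∀ i, Measure.map (ξ i) P = gaussianReal 0 1)
    (d σ u : ℝ) (hd : 0 < d) (hσ : 0 < σ)
    (hY : ∀ m ω, Y m ω = u - d * m + σ * ∑ i ∈ Finset.range m, ξ (i + 1) ω)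
    (n k : ℕ) :
    ENNReal.ofReal (1/25) ^ (k+1) * P (Bev d σ Y n k)
      ≤ P (Bev d σ Y n k ∩ Cev (d/σ - 1) ξ n k) := by
  obtain ⟨A, hA, hrep⟩ := B_rep d σ u ξ Y hY n (σ*(k:ℝ)) (σ*((k:ℝ)+1))
  have hB : Bev d σ Y n k
      = (fun ω (i : (Finset.Icc 1 n : Finset ℕ)) => ξ i ω) ⁻¹' A := hrep
  have h := key_indep ξ hξm hξi hA hB (Finset.Icc (n+1) (n+1+k))
    (by intro i hi; simp only [Finset.mem_Icc] at hi; omega) (d/σ - 1)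
  have hCev : Cev (d/σ - 1) ξ n k = ⋂ i ∈ Finset.Icc (n+1) (n+1+k), ξ i ⁻¹' Set.Iio (d/σ - 1) :=
    rfl
  rw [hCev, h, prod_iio ξ hξi, mul_comm]
  apply mul_le_mul' le_rfl
  have heach : ∀ i ∈ Finset.Icc (n+1) (n+1+k),
      ENNReal.ofReal (1/25) ≤ P (ξ i ⁻¹' Set.Iio (d/σ - 1)) := by
    intro i _
    rw [← Measure.map_apply (hξm i) measurableSet_Iio, hξmap]
    calc ENNReal.ofReal (1/25) ≤ gaussianReal 0 1 (Set.Iio (-1)) := gauss_low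
      _ ≤ gaussianReal 0 1 (Set.Iio (d/σ - 1)) := by
          apply measure_mono
          apply Set.Iio_subset_Iio
          have : 0 < d/σ := div_pos hd hσ
          linarith
  calc ENNReal.ofReal (1/25) ^ (k+1)
      = ∏ _i ∈ Finset.Icc (n+1) (n+1+k), ENNReal.ofReal (1/25) := by
        rw [Finset.prod_const, Nat.card_Icc]
        congr 1
        omega
    _ ≤ ∏ i ∈ Finset.Icc (n+1) (n+1+k), P (ξ i ⁻¹' Set.Iio (d/σ - 1)) :=
        Finset.prod_le_prod' heach

lemma L5 [IsProbabilityMeasure P] (ξ Y : ℕ → Ω → ℝ) (S : Ω → ℕ)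
    (hξm : ∀ i, Measurable (ξ i))
    (d σ u : ℝ) (hd : 0 < d) (hσ : 0 < σ) (hdu : d < u)
    (hY : ∀ m ω, Y m ω = u - d * m + σ * ∑ i ∈ Finset.range m, ξ (i + 1) ω)
    (hS : ∀ ω, S ω = sInf {m : ℕ | 1 ≤ m ∧ Y m ω ≤ d})
    (k : ℕ) :
    ∑' n, P (Bev d σ Y n k ∩ Cev (d/σ - 1) ξ n k) ≤ (k:ℝ≥0∞) + 1 := by
  have hstep : ∀ m ω, Y (m+1) ω = Y m ω - d + σ * ξ (m+1) ω := by
    intro m ω; rw [hY, hY, Finset.sum_range_succ]; push_cast; ring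
  have hCmeas : ∀ n, MeasurableSet (Cev (d/σ - 1) ξ n k) := by
    intro n
    apply MeasurableSet.biInter (Set.to_countable _)
    intro i _
    exact (hξm i) measurableSet_Iio
  have hEmeas : ∀ n, MeasurableSet (Bev d σ Y n k ∩ Cev (d/σ - 1) ξ n k) :=
    fun n => (Bev_meas ξ Y hξm d σ u hY n k).inter (hCmeas n)
  -- key inclusion
  have hsub : ∀ n ω, ω ∈ Bev d σ Y n k ∩ Cev (d/σ - 1) ξ n k →
      n + 1 ≤ S ω ∧ S ω ≤ n + 1 + k := by
    rintro n ω ⟨hB, hC⟩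
    obtain ⟨hBall, hB1, hB2⟩ := hB
    have hCi : ∀ i, n+1 ≤ i → i ≤ n+1+k → ξ i ω < d/σ - 1 := by
      intro i h1 h2
      have := Set.mem_iInter₂.mp hC i (Finset.mem_Icc.mpr ⟨h1, h2⟩)
      exact this
    have hξd : ∀ i, n+1 ≤ i → i ≤ n+1+k → σ * ξ i ω < d - σ := by
      intro i h1 h2
      have h3 := hCi i h1 h2
      have h4 : σ * ξ i ω < σ * (d/σ - 1) := by
        apply mul_lt_mul_of_pos_left h3 hσ
      have h5 : σ * (d/σ - 1) = d - σ := by field_simp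
      linarith
    have hdec : ∀ i : ℕ, i ≤ k → Y (n+1+i) ω - d < σ*((k:ℝ)+1) - σ*((i:ℝ)+1) := by
      intro i
      induction i with
      | zero =>
        intro _
        have hs := hstep n ω
        have h6 := hξd (n+1) le_rfl (by omega)
        simp only [Nat.add_zero, Nat.cast_zero]
        rw [show n+1+0 = n+1 from rfl]
        nlinarith [hσ, hd]
      | succ i ih =>
        intro hik
        have hi : i ≤ k := by omega
        have ih' := ih hi
        have hs := hstep (n+1+i) ω
        have h6 := hξd (n+1+i+1) (by omega) (by omega)
        rw [show n+1+(i+1) = n+1+i+1 from rfl]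
        push_cast
        rw [hs]
        push_cast at ih'
        nlinarith [hσ]
    have hYk : Y (n+1+k) ω ≤ d := by
      have := hdec k le_rfl
      linarith
    have hne : {m : ℕ | 1 ≤ m ∧ Y m ω ≤ d}.Nonempty := ⟨n+1+k, by omega, hYk⟩
    have hSmem := Nat.sInf_mem hne
    rw [← hS ω] at hSmem
    obtain ⟨hS1, hS2⟩ := hSmem
    constructor
    · by_contra h
      push_neg at h
      have : d < Y (S ω) ω := hBall (S ω) hS1 (by omega)
      linarith
    · rw [hS ω]
      exact Nat.sInf_le ⟨by omega, hYk⟩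
  -- counting
  have hpoint : ∀ ω, (∑' n, (Bev d σ Y n k ∩ Cev (d/σ - 1) ξ n k).indicator
      (1 : Ω → ℝ≥0∞) ω) ≤ (k:ℝ≥0∞) + 1 := by
    intro ω
    calc (∑' n, (Bev d σ Y n k ∩ Cev (d/σ - 1) ξ n k).indicator (1 : Ω → ℝ≥0∞) ω)
        ≤ ∑' n, (if n ∈ Finset.Icc (S ω - 1 - k) (S ω - 1) then (1:ℝ≥0∞) else 0) := by
          apply ENNReal.tsum_le_tsum
          intro n
          by_cases hω : ω ∈ Bev d σ Y n k ∩ Cev (d/σ - 1) ξ n k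
          · rw [Set.indicator_of_mem hω]
            have h := hsub n ω hω
            rw [if_pos (Finset.mem_Icc.mpr (by omega))]
            simp
          · rw [Set.indicator_of_notMem hω]
            exact zero_le
      _ = ∑ n ∈ Finset.Icc (S ω - 1 - k) (S ω - 1), (if n ∈ Finset.Icc (S ω - 1 - k) (S ω - 1) then (1:ℝ≥0∞) else 0) := by
          apply tsum_eq_sum
          intro n hn
          rw [if_neg hn]
      _ = ∑ n ∈ Finset.Icc (S ω - 1 - k) (S ω - 1), (1:ℝ≥0∞) := by
          apply Finset.sum_congr rfl
          intro n hn
          rw [if_pos hn]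
      _ = ((Finset.Icc (S ω - 1 - k) (S ω - 1)).card : ℝ≥0∞) := by
          rw [Finset.sum_const, nsmul_eq_mul, mul_one]
      _ ≤ (k:ℝ≥0∞) + 1 := by
          rw [Nat.card_Icc]
          have hcard : (S ω - 1) + 1 - (S ω - 1 - k) ≤ k + 1 := by omega
          calc ((S ω - 1 + 1 - (S ω - 1 - k) : ℕ) : ℝ≥0∞) ≤ ((k + 1 : ℕ) : ℝ≥0∞) := by
                exact_mod_cast hcard
            _ = (k:ℝ≥0∞) + 1 := by push_cast; rfl
  calc ∑' n, P (Bev d σ Y n k ∩ Cev (d/σ - 1) ξ n k)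
      = ∑' n, ∫⁻ ω, (Bev d σ Y n k ∩ Cev (d/σ - 1) ξ n k).indicator (1 : Ω → ℝ≥0∞) ω ∂P := by
        apply tsum_congr
        intro n
        rw [lintegral_indicator_one (hEmeas n)]
    _ = ∫⁻ ω, ∑' n, (Bev d σ Y n k ∩ Cev (d/σ - 1) ξ n k).indicator (1 : Ω → ℝ≥0∞) ω ∂P :=
        (lintegral_tsum (fun n => (measurable_one.indicator (hEmeas n)).aemeasurable)).symm
    _ ≤ ∫⁻ _ω, ((k:ℝ≥0∞) + 1) ∂P := lintegral_mono hpoint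
    _ = (k:ℝ≥0∞) + 1 := by
        rw [lintegral_const, measure_univ, mul_one]

end Main


theorem stmt17 :
    ∃ C : ℝ, 0 < C ∧
      ∀ (Ω : Type) (_ : MeasurableSpace Ω) (P : Measure Ω), IsProbabilityMeasure P →
      ∀ ξ : ℕ → Ω → ℝ, (∀ i, Measurable (ξ i)) →
        iIndepFun ξ P →
        (∀ i, Measure.map (ξ i) P = gaussianReal 0 1) →
        ∀ d σ u : ℝ, 0 < d → 0 < σ → d < u →
        ∀ Y : ℕ → Ω → ℝ,
          (∀ m ω, Y m ω = u - d * m + σ * ∑ i ∈ Finset.range m, ξ (i + 1) ω) →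
        ∀ S : Ω → ℕ, (∀ ω, S ω = sInf {m : ℕ | 1 ≤ m ∧ Y m ω ≤ d}) →
          (∀ᵐ ω ∂P, ∃ m : ℕ, 1 ≤ m ∧ Y m ω ≤ d) ∧
          ∀ a : ℝ, a ≤ -d →
            P {ω | Y (S ω) ω < a} ≤
              ENNReal.ofReal (C * Real.exp (-(a ^ 2) / (2 * σ ^ 2))) := by
  refine ⟨∑' k, Cfun k, ?_, ?_⟩
  · have h0 : Cfun 0 ≤ ∑' k, Cfun k := Cfun_summable.le_tsum 0 (fun i _ => Cfun_nonneg i)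
    have h1 : (0:ℝ) < Cfun 0 := by unfold Cfun; positivity
    linarith
  intro Ω mΩ P hP ξ hξm hξi hξmap d σ u hd hσ hdu Y hY S hS
  have hσ0 : σ ≠ 0 := ne_of_gt hσ
  constructor
  · -- almost sure hitting
    have hint : Integrable (ξ 1) P := by
      have h0 := gauss_integrable_id
      rw [← hξmap 1] at h0
      exact (integrable_map_measure aestronglyMeasurable_id (hξm 1).aemeasurable).mp h0
    have hEzero : ∫ ω, ξ 1 ω ∂P = 0 := by
      have h0 : ∫ x, x ∂(Measure.map (ξ 1) P) = 0 := by
        rw [hξmap 1]; exact gauss_integral_id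
      rwa [integral_map (f := fun x : ℝ => x) (hξm 1).aemeasurable
        aestronglyMeasurable_id] at h0
    have hpair : Pairwise (Function.onFun (fun f g => IndepFun f g P) (fun i => ξ (i+1))) := by
      intro i j hij
      exact hξi.indepFun (by omega)
    have hident : ∀ i : ℕ, IdentDistrib (ξ (i+1)) (ξ (0+1)) P P := by
      intro i
      exact ⟨(hξm _).aemeasurable, (hξm _).aemeasurable, by rw [hξmap, hξmap]⟩
    have hslln := strong_law_ae_real (fun i => ξ (i+1)) hint hpair hident
    filter_upwards [hslln] with ω hω
    have hE : P[fun ω => ξ (0+1) ω] = 0 := hEzero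
    rw [hE] at hω
    have hconv : Tendsto
        (fun m : ℕ => u/m - d + σ * ((∑ i ∈ Finset.range m, ξ (i+1) ω)/m)) atTop
        (𝓝 (0 - d + σ * 0)) :=
      ((tendsto_const_div_atTop_nhds_zero_nat u).sub_const d).add (hω.const_mul σ)
    rw [show (0 - d + σ * 0 : ℝ) = -d by ring] at hconv
    have hneg := hconv.eventually_lt_const (show (-d:ℝ) < 0 by linarith)
    obtain ⟨m, hm2, hm1⟩ := (hneg.and (eventually_ge_atTop 1)).exists
    refine ⟨m, hm1, ?_⟩
    have hmpos : (0:ℝ) < m := by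
      have : (1:ℕ) ≤ m := hm1
      exact_mod_cast Nat.lt_of_lt_of_le Nat.zero_lt_one this
    have hYm : Y m ω = m * (u/m - d + σ * ((∑ i ∈ Finset.range m, ξ (i+1) ω)/m)) := by
      rw [hY]
      field_simp
    nlinarith [mul_neg_of_pos_of_neg hmpos hm2]
  · -- tail bound
    intro a ha
    have ha0 : a < 0 := by linarith
    have hβ : 0 < -a/σ := div_pos (by linarith) hσ
    have hperk : ∀ k : ℕ, (∑' n, P (Bev d σ Y n k) * gaussianReal 0 1 (Set.Iio (a/σ - (k:ℝ))))
        ≤ ENNReal.ofReal (Cfun k) * ENNReal.ofReal (Real.exp (-(a^2) / (2*σ^2))) := by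
      intro k
      rw [ENNReal.tsum_mul_right]
      have htk : (0:ℝ) ≤ -a/σ + k := by
        have : (0:ℝ) ≤ (k:ℝ) := Nat.cast_nonneg k
        linarith
      have hgt : gaussianReal 0 1 (Set.Iio (a/σ - (k:ℝ)))
          ≤ ENNReal.ofReal (Real.exp (-(-a/σ+(k:ℝ))^2/2)) := by
        have h0 := gauss_tail (-a/σ + (k:ℝ)) htk
        rw [show -(-a/σ + (k:ℝ)) = a/σ - (k:ℝ) by ring] at h0
        exact h0
      have hexp : Real.exp (-(-a/σ+(k:ℝ))^2/2)
          ≤ Real.exp (-(a^2)/(2*σ^2)) * Real.exp (-(k:ℝ)^2/2) := by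
        rw [← Real.exp_add]
        apply Real.exp_le_exp.2
        have h5 : -(a^2)/(2*σ^2) = -((-a/σ)^2)/2 := by
          field_simp
        rw [h5]
        have hcross : 0 ≤ (-a/σ) * (k:ℝ) := mul_nonneg hβ.le (Nat.cast_nonneg k)
        nlinarith [hcross]
      have hq : ENNReal.ofReal (1/25)^(k+1) * (∑' n, P (Bev d σ Y n k)) ≤ (k:ℝ≥0∞) + 1 := by
        rw [← ENNReal.tsum_mul_left]
        calc ∑' n, ENNReal.ofReal (1/25)^(k+1) * P (Bev d σ Y n k)
            ≤ ∑' n, P (Bev d σ Y n k ∩ Cev (d/σ - 1) ξ n k) :=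
              ENNReal.tsum_le_tsum (fun n => L4 ξ Y hξm hξi hξmap d σ u hd hσ hY n k)
          _ ≤ (k:ℝ≥0∞) + 1 := L5 ξ Y S hξm d σ u hd hσ hdu hY hS k
      have hk1 : ((k:ℝ≥0∞)+1) = ENNReal.ofReal ((k:ℝ)+1) := by
        rw [ENNReal.ofReal_add (Nat.cast_nonneg k) zero_le_one, ENNReal.ofReal_natCast,
          ENNReal.ofReal_one]
      calc (∑' n, P (Bev d σ Y n k)) * gaussianReal 0 1 (Set.Iio (a/σ - (k:ℝ)))
          ≤ (∑' n, P (Bev d σ Y n k)) * (ENNReal.ofReal (1/25)^(k+1)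
            * ENNReal.ofReal ((25:ℝ)^(k+1) * (Real.exp (-(a^2)/(2*σ^2))
              * Real.exp (-(k:ℝ)^2/2)))) := by
            apply mul_le_mul' le_rfl
            have hqq : ENNReal.ofReal (1/25)^(k+1) * ENNReal.ofReal ((25:ℝ)^(k+1)
                * (Real.exp (-(a^2)/(2*σ^2)) * Real.exp (-(k:ℝ)^2/2)))
                = ENNReal.ofReal (Real.exp (-(a^2)/(2*σ^2)) * Real.exp (-(k:ℝ)^2/2)) := by
              rw [← ENNReal.ofReal_pow (by norm_num : (0:ℝ) ≤ 1/25),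
                ← ENNReal.ofReal_mul (by positivity)]
              congr 1
              rw [← mul_assoc, ← mul_pow]
              norm_num
            rw [hqq]
            calc gaussianReal 0 1 (Set.Iio (a/σ - (k:ℝ)))
                ≤ ENNReal.ofReal (Real.exp (-(-a/σ+(k:ℝ))^2/2)) := hgt
              _ ≤ ENNReal.ofReal (Real.exp (-(a^2)/(2*σ^2)) * Real.exp (-(k:ℝ)^2/2)) :=
                  ENNReal.ofReal_le_ofReal hexp
        _ = (ENNReal.ofReal (1/25)^(k+1) * (∑' n, P (Bev d σ Y n k)))
            * ENNReal.ofReal ((25:ℝ)^(k+1) * (Real.exp (-(a^2)/(2*σ^2))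
              * Real.exp (-(k:ℝ)^2/2))) := by ring
        _ ≤ ((k:ℝ≥0∞) + 1) * ENNReal.ofReal ((25:ℝ)^(k+1) * (Real.exp (-(a^2)/(2*σ^2))
              * Real.exp (-(k:ℝ)^2/2))) := mul_le_mul' hq le_rfl
        _ = ENNReal.ofReal (Cfun k) * ENNReal.ofReal (Real.exp (-(a^2)/(2*σ^2))) := by
            rw [hk1, ← ENNReal.ofReal_mul (by positivity), ← ENNReal.ofReal_mul (Cfun_nonneg k)]
            congr 1
            unfold Cfun
            ring
    calc P {ω | Y (S ω) ω < a}
        ≤ P (⋃ n, Dev d a Y n) :=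
          measure_mono (L1 d a u hd hdu ha Y (fun ω => by rw [hY]; simp) S hS)
      _ ≤ ∑' n, P (Dev d a Y n) := measure_iUnion_le _
      _ ≤ ∑' n, P (⋃ k : ℕ, (Bev d σ Y n k ∩ ξ (n+1) ⁻¹' Set.Iio (a/σ - (k:ℝ)))) :=
          ENNReal.tsum_le_tsum (fun n => measure_mono (L2 d σ a u hσ hdu ξ Y hY n))
      _ ≤ ∑' n, ∑' k : ℕ, P (Bev d σ Y n k ∩ ξ (n+1) ⁻¹' Set.Iio (a/σ - (k:ℝ))) :=
          ENNReal.tsum_le_tsum (fun n => measure_iUnion_le _)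
      _ = ∑' n, ∑' k : ℕ, P (Bev d σ Y n k) * gaussianReal 0 1 (Set.Iio (a/σ - (k:ℝ))) :=
          tsum_congr (fun n => tsum_congr (fun k => L3 ξ Y hξm hξi hξmap d σ u hY n k _))
      _ = ∑' k : ℕ, ∑' n, P (Bev d σ Y n k) * gaussianReal 0 1 (Set.Iio (a/σ - (k:ℝ))) :=
          ENNReal.tsum_comm
      _ ≤ ∑' k : ℕ, ENNReal.ofReal (Cfun k) * ENNReal.ofReal (Real.exp (-(a^2)/(2*σ^2))) :=
          ENNReal.tsum_le_tsum hperk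
      _ = (∑' k : ℕ, ENNReal.ofReal (Cfun k)) * ENNReal.ofReal (Real.exp (-(a^2)/(2*σ^2))) :=
          ENNReal.tsum_mul_right
      _ = ENNReal.ofReal (∑' k, Cfun k) * ENNReal.ofReal (Real.exp (-(a^2)/(2*σ^2))) := by
          rw [ENNReal.ofReal_tsum_of_nonneg Cfun_nonneg Cfun_summable]
      _ = ENNReal.ofReal ((∑' k, Cfun k) * Real.exp (-(a ^ 2) / (2 * σ ^ 2))) :=
          (ENNReal.ofReal_mul (tsum_nonneg Cfun_nonneg)).symm
end

section
/- For every κ ∈ (0,1) there exists ε > 0 such that the following holds for every d > 0, every σ ∈ (0, ε·d] and every u ∈ ℝ. Let (Y_m)_{m≥0} be the oscillating random walk with parameters d, σ started at u, and let T = inf{m ≥ 0 : |Y_m| ≤ d}. Then for every j ∈ ℕ, P(T > j) ≤ κ^{2j − 8|u|/d}. -/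
open MeasureTheory ProbabilityTheory

/-- The oscillating random walk with parameters `d`, `σ`, started at `u`, driven by the
noise sequence `ξ`: the increment drifts by `-d` above `d`, by `d` below `-d`, and has
zero drift (and doubled noise) inside `[-d, d]`. -/
noncomputable def oscWalk (Ω : Type*) (d σ u : ℝ) (ξ : ℕ → Ω → ℝ) : ℕ → Ω → ℝ
  | 0 => fun _ => u
  | m + 1 => fun ω =>
      let y := oscWalk Ω d σ u ξ m ω
      y + (if d < y then -d else if y < -d then d else 0) +
        σ * (if |y| ≤ d then 2 else 1) * ξ (m + 1) ω

lemma gauss_pdf_mul (t x : ℝ) :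
    Real.exp (t * x) * gaussianPDFReal 0 1 x = Real.exp (t ^ 2 / 2) * gaussianPDFReal t 1 x := by
  simp only [gaussianPDFReal, NNReal.coe_one, mul_one, sub_zero]
  rw [mul_left_comm, mul_left_comm (Real.exp (t ^ 2 / 2)), ← Real.exp_add, ← Real.exp_add]
  congr 2
  ring

lemma integrable_exp_gaussianReal (t : ℝ) :
    Integrable (fun x => Real.exp (t * x)) (gaussianReal 0 1) := by
  have h1 : gaussianReal 0 1
      = MeasureTheory.volume.withDensity (fun x => ((gaussianPDFReal 0 1 x).toNNReal : ENNReal)) := by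
    rw [gaussianReal_of_var_ne_zero 0 one_ne_zero]; rfl
  have hmeas : Measurable (fun x => (gaussianPDFReal 0 1 x).toNNReal) :=
    (measurable_gaussianPDFReal 0 1).real_toNNReal
  rw [h1, integrable_withDensity_iff_integrable_smul hmeas]
  have heq : (fun x => (gaussianPDFReal 0 1 x).toNNReal • Real.exp (t * x))
      = fun x => Real.exp (t ^ 2 / 2) * gaussianPDFReal t 1 x := by
    funext x
    rw [NNReal.smul_def, smul_eq_mul, Real.coe_toNNReal _ (gaussianPDFReal_nonneg _ _ _),
      mul_comm, gauss_pdf_mul]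
  rw [heq]
  exact (integrable_gaussianPDFReal t 1).const_mul _

lemma integral_exp_gaussianReal (t : ℝ) :
    ∫ x, Real.exp (t * x) ∂(gaussianReal 0 1) = Real.exp (t ^ 2 / 2) := by
  have h1 : gaussianReal 0 1
      = MeasureTheory.volume.withDensity (fun x => ((gaussianPDFReal 0 1 x).toNNReal : ENNReal)) := by
    rw [gaussianReal_of_var_ne_zero 0 one_ne_zero]; rfl
  have hmeas : Measurable (fun x => (gaussianPDFReal 0 1 x).toNNReal) :=
    (measurable_gaussianPDFReal 0 1).real_toNNReal
  rw [h1, integral_withDensity_eq_integral_smul hmeas]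
  have heq : (fun x => (gaussianPDFReal 0 1 x).toNNReal • Real.exp (t * x))
      = fun x => Real.exp (t ^ 2 / 2) * gaussianPDFReal t 1 x := by
    funext x
    rw [NNReal.smul_def, smul_eq_mul, Real.coe_toNNReal _ (gaussianPDFReal_nonneg _ _ _),
      mul_comm, gauss_pdf_mul]
  rw [heq, integral_const_mul, integral_gaussianPDFReal_eq_one t one_ne_zero, mul_one]

lemma osc_path {Ω : Type} (d σ u : ℝ) (hd : 0 < d) (hσ : 0 < σ) (ξ : ℕ → Ω → ℝ) (ω : Ω) :
    ∀ m : ℕ, (∀ k, k ≤ m → d < |oscWalk Ω d σ u ξ k ω|) →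
      |oscWalk Ω d σ u ξ m ω| ≤ |u| - m * d + σ * ∑ k ∈ Finset.Icc 1 m, |ξ k ω| := by
  intro m
  induction m with
  | zero => intro _; simp [oscWalk]
  | succ m ih =>
    intro h
    have hy : d < |oscWalk Ω d σ u ξ m ω| := h m (Nat.le_succ m)
    set y := oscWalk Ω d σ u ξ m ω with hy_def
    have hnotin : ¬ (|y| ≤ d) := not_le.mpr hy
    have hstep : oscWalk Ω d σ u ξ (m+1) ω
        = y + (if d < y then -d else if y < -d then d else 0) + σ * 1 * ξ (m+1) ω := by
      rw [show oscWalk Ω d σ u ξ (m+1) ω = y + (if d < y then -d else if y < -d then d else 0) +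
        σ * (if |y| ≤ d then 2 else 1) * ξ (m+1) ω from rfl, if_neg hnotin]
    have hdrift : |y + (if d < y then -d else if y < -d then d else 0)| = |y| - d := by
      rcases lt_abs.mp hy with h1 | h1
      · rw [if_pos h1, abs_of_pos (by linarith : (0:ℝ) < y), abs_of_nonneg (by linarith)]
        ring
      · have hneg : y < -d := by linarith
        have hnot : ¬ d < y := by linarith
        rw [if_neg hnot, if_pos hneg, abs_of_neg (by linarith : y < 0),
          abs_of_nonpos (by linarith : y + d ≤ 0)]
        ring
    have habs : |oscWalk Ω d σ u ξ (m+1) ω| ≤ (|y| - d) + σ * |ξ (m+1) ω| := by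
      rw [hstep]
      calc |y + (if d < y then -d else if y < -d then d else 0) + σ * 1 * ξ (m+1) ω|
          ≤ |y + (if d < y then -d else if y < -d then d else 0)| + |σ * 1 * ξ (m+1) ω| :=
            abs_add_le _ _
        _ = (|y| - d) + σ * |ξ (m+1) ω| := by
            rw [hdrift, mul_one, abs_mul, abs_of_pos hσ]
    have hih := ih (fun k hk => h k (hk.trans (Nat.le_succ m)))
    have hsum : ∑ k ∈ Finset.Icc 1 (m+1), |ξ k ω|
        = (∑ k ∈ Finset.Icc 1 m, |ξ k ω|) + |ξ (m+1) ω| :=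
      Finset.sum_Icc_succ_top (Nat.one_le_iff_ne_zero.mpr (Nat.succ_ne_zero m)) _
    push_cast
    rw [hsum]
    push_cast at hih
    nlinarith [abs_nonneg (ξ (m+1) ω)]

theorem stmt18 (κ : ℝ) (hκ : κ ∈ Set.Ioo (0 : ℝ) 1) :
    ∃ ε : ℝ, 0 < ε ∧
      ∀ d : ℝ, 0 < d → ∀ σ : ℝ, 0 < σ → σ ≤ ε * d → ∀ u : ℝ,
      ∀ (Ω : Type) (_ : MeasurableSpace Ω) (P : Measure Ω), IsProbabilityMeasure P →
      ∀ ξ : ℕ → Ω → ℝ, (∀ i, Measurable (ξ i)) →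
        iIndepFun ξ P →
        (∀ i, Measure.map (ξ i) P = gaussianReal 0 1) →
        ∀ j : ℕ,
          P {ω | ∀ m : ℕ, m ≤ j → d < |oscWalk Ω d σ u ξ m ω|} ≤
            ENNReal.ofReal (κ ^ ((2 * j : ℝ) - 8 * |u| / d)) := by
  obtain ⟨hκ0, hκ1⟩ := hκ
  have hlogκ : Real.log κ < 0 := Real.log_neg hκ0 hκ1
  set C : ℝ := Real.log 2 + 2⁻¹ with hC_def
  have hC : 0 < C := by
    have := Real.log_pos (by norm_num : (1:ℝ) < 2)
    positivity
  have hK : 0 < C - 2 * Real.log κ := by linarith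
  refine ⟨3 / (4 * (C - 2 * Real.log κ)), by positivity, ?_⟩
  set ε : ℝ := 3 / (4 * (C - 2 * Real.log κ)) with hε_def
  have hε : 0 < ε := by positivity
  intro d hd σ hσ hσε u Ω mΩ P hP ξ hmeas hindep hmap j
  by_cases hcase : (2 * (j:ℝ)) - 8 * |u| / d ≤ 0
  · calc P _ ≤ 1 := prob_le_one
      _ ≤ ENNReal.ofReal (κ ^ ((2 * j : ℝ) - 8 * |u| / d)) := by
          rw [← ENNReal.ofReal_one]
          exact ENNReal.ofReal_le_ofReal
            (Real.one_le_rpow_of_pos_of_le_one_of_nonpos hκ0 hκ1.le hcase)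
  push_neg at hcase
  have hu_small : |u| < (j:ℝ) * d / 4 := by
    have h1 : 8 * |u| / d < 2 * (j:ℝ) := by linarith
    rw [div_lt_iff₀ hd] at h1
    linarith
  have hu0 : 0 ≤ |u| := abs_nonneg u
  -- the absolute values of the noises
  set X : ℕ → Ω → ℝ := fun i ω => |ξ i ω| with hX_def
  have hXmeas : ∀ i, Measurable (X i) := fun i => (hmeas i).abs
  have hXindep : iIndepFun X P :=
    hindep.comp (fun _ => fun x => |x|) (fun _ => measurable_abs)
  -- integrability and mgf of exp (t * ξ i)
  have hint : ∀ (t : ℝ) (i : ℕ), Integrable (fun ω => Real.exp (t * ξ i ω)) P := by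
    intro t i
    have h1 : Integrable (fun x => Real.exp (t * x)) (Measure.map (ξ i) P) := by
      rw [hmap i]; exact integrable_exp_gaussianReal t
    exact (integrable_map_measure (h1.aestronglyMeasurable) (hmeas i).aemeasurable).mp h1
  have hintval : ∀ (t : ℝ) (i : ℕ),
      ∫ ω, Real.exp (t * ξ i ω) ∂P = Real.exp (t ^ 2 / 2) := by
    intro t i
    rw [← integral_exp_gaussianReal t, ← hmap i,
      integral_map (hmeas i).aemeasurable]
    have h1 : Integrable (fun x => Real.exp (t * x)) (Measure.map (ξ i) P) := by
      rw [hmap i]; exact integrable_exp_gaussianReal t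
    exact h1.aestronglyMeasurable
  -- pointwise bound exp |x| ≤ exp x + exp (-x)
  have hptwise : ∀ i ω, Real.exp (1 * X i ω) ≤ Real.exp (1 * ξ i ω) + Real.exp (-1 * ξ i ω) := by
    intro i ω
    simp only [hX_def, one_mul, neg_one_mul]
    rcases abs_choice (ξ i ω) with h | h <;> rw [h]
    · nlinarith [Real.exp_pos (-(ξ i ω))]
    · nlinarith [Real.exp_pos (ξ i ω)]
  have hXint : ∀ i, Integrable (fun ω => Real.exp (1 * X i ω)) P := by
    intro i
    refine Integrable.mono' ((hint 1 i).add (hint (-1) i))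
      (((hXmeas i).const_mul 1).exp.aestronglyMeasurable) ?_
    filter_upwards with ω
    rw [Real.norm_eq_abs, abs_of_pos (Real.exp_pos _)]
    exact hptwise i ω
  have hXmgf : ∀ i, mgf (X i) P 1 ≤ 2 * Real.exp 2⁻¹ := by
    intro i
    have h1 : mgf (X i) P 1 = ∫ ω, Real.exp (1 * X i ω) ∂P := rfl
    rw [h1]
    calc ∫ ω, Real.exp (1 * X i ω) ∂P
        ≤ ∫ ω, (Real.exp (1 * ξ i ω) + Real.exp (-1 * ξ i ω)) ∂P :=
          integral_mono (hXint i) ((hint 1 i).add (hint (-1) i)) (fun ω => hptwise i ω)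
      _ = Real.exp ((1:ℝ)^2/2) + Real.exp ((-1:ℝ)^2/2) := by
          rw [integral_add (hint 1 i) (hint (-1) i), hintval, hintval]
      _ = 2 * Real.exp 2⁻¹ := by norm_num; ring
  -- Chernoff bound for the sum S
  set S : Ω → ℝ := ∑ i ∈ Finset.Icc 1 j, X i with hS_def
  have hS_int : Integrable (fun ω => Real.exp (1 * S ω)) P :=
    hXindep.integrable_exp_mul_sum hXmeas (fun i _ => hXint i)
  set tval : ℝ := ((j:ℝ) * d + d - |u|) / σ with ht_def
  have chern : (P {ω | tval ≤ S ω}).toReal ≤ Real.exp (-1 * tval) * mgf S P 1 :=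
    measure_ge_le_exp_mul_mgf tval zero_le_one hS_int
  have hmgfS : mgf S P 1 ≤ (2 * Real.exp 2⁻¹) ^ j := by
    rw [hS_def, hXindep.mgf_sum hXmeas]
    calc ∏ i ∈ Finset.Icc 1 j, mgf (X i) P 1
        ≤ ∏ i ∈ Finset.Icc 1 j, (2 * Real.exp 2⁻¹) :=
          Finset.prod_le_prod (fun i _ => mgf_nonneg) (fun i _ => hXmgf i)
      _ = (2 * Real.exp 2⁻¹) ^ j := by
          rw [Finset.prod_const, Nat.card_Icc]; norm_num
  -- event inclusion
  have hsub : {ω | ∀ m : ℕ, m ≤ j → d < |oscWalk Ω d σ u ξ m ω|} ⊆ {ω | tval ≤ S ω} := by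
    intro ω hω
    have hp := osc_path d σ u hd hσ ξ ω j hω
    have hj : d < |oscWalk Ω d σ u ξ j ω| := hω j le_rfl
    have hSω : S ω = ∑ k ∈ Finset.Icc 1 j, |ξ k ω| := by
      rw [hS_def, Finset.sum_apply]
    have h2 : d < |u| - (j:ℝ) * d + σ * S ω := by rw [hSω]; linarith
    simp only [Set.mem_setOf_eq, ht_def]
    rw [div_le_iff₀ hσ]
    nlinarith
  -- numeric bound
  have hnum : Real.exp (-1 * tval) * (2 * Real.exp 2⁻¹) ^ j
      ≤ κ ^ ((2 * j : ℝ) - 8 * |u| / d) := by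
    have hpow : (2 * Real.exp 2⁻¹) ^ j = Real.exp ((j:ℝ) * C) := by
      rw [Real.exp_nat_mul, hC_def, Real.exp_add, Real.exp_log two_pos]
    rw [hpow, ← Real.exp_add, Real.rpow_def_of_pos hκ0, Real.exp_le_exp]
    -- tval lower bound
    have hNpos : 0 < (j:ℝ) * d + d - |u| := by nlinarith
    have htlb : ((j:ℝ) + 1 - |u| / d) / ε ≤ tval := by
      have h1 : ((j:ℝ) * d + d - |u|) / (ε * d) ≤ ((j:ℝ) * d + d - |u|) / σ := by
        gcongr
      have h2 : ((j:ℝ) * d + d - |u|) / (ε * d) = ((j:ℝ) + 1 - |u| / d) / ε := by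
        field_simp
      calc ((j:ℝ) + 1 - |u| / d) / ε = ((j:ℝ) * d + d - |u|) / (ε * d) := h2.symm
        _ ≤ ((j:ℝ) * d + d - |u|) / σ := h1
    set a : ℝ := |u| / d with ha_def
    have ha0 : 0 ≤ a := by positivity
    have ha4 : a < (j:ℝ) / 4 := by
      rw [ha_def, div_lt_div_iff₀ hd (by norm_num : (0:ℝ) < 4)]
      linarith
    have hεinv : ((j:ℝ) + 1 - a) / ε = ((j:ℝ) + 1 - a) * (4 * (C - 2 * Real.log κ)) / 3 := by
      rw [hε_def]
      field_simp
    have hgoal : Real.log κ * (2 * (j:ℝ) - 8 * a) ≥ -(((j:ℝ) + 1 - a) / ε) + (j:ℝ) * C := by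
      rw [hεinv]
      have hj0 : (0:ℝ) ≤ (j:ℝ) := Nat.cast_nonneg j
      nlinarith [mul_nonneg ha0 (neg_nonneg.mpr hlogκ.le), hK,
        mul_le_mul_of_nonneg_right (show (3 * (j:ℝ)/4 : ℝ) ≤ (j:ℝ) + 1 - a by linarith) hK.le]
    have h8 : 8 * |u| / d = 8 * a := by rw [ha_def]; ring
    rw [h8]
    clear_value tval ε a
    have step1 : -1 * tval + (j:ℝ) * C ≤ -(((j:ℝ) + 1 - a) / ε) + (j:ℝ) * C := by
      linarith only [htlb]
    have step2 : -(((j:ℝ) + 1 - a) / ε) + (j:ℝ) * C ≤ Real.log κ * (2 * (j:ℝ) - 8 * a) := by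
      linarith only [hgoal]
    exact step1.trans step2
  -- conclude
  calc P {ω | ∀ m : ℕ, m ≤ j → d < |oscWalk Ω d σ u ξ m ω|}
      ≤ P {ω | tval ≤ S ω} := measure_mono hsub
    _ = ENNReal.ofReal ((P {ω | tval ≤ S ω}).toReal) :=
        (ENNReal.ofReal_toReal (measure_ne_top _ _)).symm
    _ ≤ ENNReal.ofReal (κ ^ ((2 * j : ℝ) - 8 * |u| / d)) := by
        refine ENNReal.ofReal_le_ofReal ?_
        calc (P {ω | tval ≤ S ω}).toReal
            ≤ Real.exp (-1 * tval) * mgf S P 1 := chern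
          _ ≤ Real.exp (-1 * tval) * (2 * Real.exp 2⁻¹) ^ j := by
              exact mul_le_mul_of_nonneg_left hmgfS (Real.exp_pos _).le
          _ ≤ κ ^ ((2 * j : ℝ) - 8 * |u| / d) := hnum
end

section
/- For every κ ∈ (0,1) there exists ε > 0 such that the following holds for every d > 0 and every σ ∈ (0, ε·d]. Let (Y_m)_{m≥0} be the oscillating random walk with parameters d, σ started at 0. Then for every integer N ≥ 1, the probability that the number of indices m with 0 ≤ m ≤ 3N and |Y_m| ≤ d is smaller than N/7 is at most κ^N. -/
open MeasureTheory ProbabilityTheory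

lemma oscWalk_succ (Ω : Type*) (d σ u : ℝ) (ξ : ℕ → Ω → ℝ) (m : ℕ) (ω : Ω) :
    oscWalk Ω d σ u ξ (m + 1) ω =
      oscWalk Ω d σ u ξ m ω +
        (if d < oscWalk Ω d σ u ξ m ω then -d
          else if oscWalk Ω d σ u ξ m ω < -d then d else 0) +
        σ * (if |oscWalk Ω d σ u ξ m ω| ≤ d then 2 else 1) * ξ (m + 1) ω := rfl

/-- Deterministic key estimate: the walk magnitude plus `d` times the number of steps is
controlled by twice `d` times the number of "inside" times plus the accumulated noise. -/
lemma oscWalk_det (d σ : ℝ) (hd : 0 < d) (hσ : 0 < σ) (Ω : Type*) (ξ : ℕ → Ω → ℝ) (ω : Ω) :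
    ∀ K : ℕ, |oscWalk Ω d σ 0 ξ K ω| + d * K ≤
      2 * d * (((Finset.range K).filter
          (fun m => |oscWalk Ω d σ 0 ξ m ω| ≤ d)).card : ℝ)
        + 2 * σ * ∑ i ∈ Finset.range K, |ξ (i + 1) ω|
  | 0 => by simp [oscWalk]
  | (K + 1) => by
    have IH := oscWalk_det d σ hd hσ Ω ξ ω K
    set y := oscWalk Ω d σ 0 ξ K ω with hy
    have hx : (0:ℝ) ≤ |ξ (K + 1) ω| := abs_nonneg _
    rw [Finset.sum_range_succ, Finset.range_add_one, Finset.filter_insert]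
    by_cases hin : |y| ≤ d
    · have h1 : ¬ d < y := not_lt.mpr (abs_le.mp hin).2
      have h2 : ¬ y < -d := not_lt.mpr (abs_le.mp hin).1
      have habs : |oscWalk Ω d σ 0 ξ (K + 1) ω| ≤ |y| + 2 * σ * |ξ (K + 1) ω| := by
        rw [oscWalk_succ, ← hy, if_neg h1, if_neg h2, if_pos hin, add_zero]
        calc |y + σ * 2 * ξ (K + 1) ω| ≤ |y| + |σ * 2 * ξ (K + 1) ω| := abs_add_le _ _
          _ = |y| + 2 * σ * |ξ (K + 1) ω| := by
              rw [abs_mul, abs_of_nonneg (by positivity : (0:ℝ) ≤ σ * 2)]; ring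
      rw [if_pos hin, Finset.card_insert_of_notMem (by simp)]
      push_cast
      linarith
    · have hout : d < |y| := not_le.mp hin
      rw [if_neg hin]
      by_cases hgt : d < y
      · have habs : |oscWalk Ω d σ 0 ξ (K + 1) ω| ≤ |y| - d + σ * |ξ (K + 1) ω| := by
          rw [oscWalk_succ, ← hy, if_pos hgt, if_neg hin]
          have he : y + -d + σ * 1 * ξ (K + 1) ω = (y - d) + σ * ξ (K + 1) ω := by ring
          rw [he]
          calc |(y - d) + σ * ξ (K + 1) ω| ≤ |y - d| + |σ * ξ (K + 1) ω| := abs_add_le _ _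
            _ = |y| - d + σ * |ξ (K + 1) ω| := by
                rw [abs_of_pos (by linarith : (0:ℝ) < y - d), abs_mul, abs_of_pos hσ,
                  abs_of_pos (by linarith : (0:ℝ) < y)]
        push_cast
        nlinarith [mul_nonneg hσ.le hx]
      · have hlt : y < -d := by
          rcases abs_cases y with ⟨h, h0⟩ | ⟨h, h0⟩
          · exfalso; exact hgt (h ▸ hout)
          · linarith [h ▸ hout]
        have habs : |oscWalk Ω d σ 0 ξ (K + 1) ω| ≤ |y| - d + σ * |ξ (K + 1) ω| := by
          rw [oscWalk_succ, ← hy, if_neg hgt, if_pos hlt, if_neg hin]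
          calc |y + d + σ * 1 * ξ (K + 1) ω| ≤ |y + d| + |σ * 1 * ξ (K + 1) ω| := abs_add_le _ _
            _ = |y| - d + σ * |ξ (K + 1) ω| := by
                rw [abs_of_neg (by linarith : y + d < 0), abs_mul, abs_of_pos (by linarith : (0:ℝ) < σ * 1),
                  abs_of_neg (by linarith : y < 0)]
                ring
        push_cast
        nlinarith [mul_nonneg hσ.le hx]

open Real in
lemma integrable_exp_abs_gaussian :
    Integrable (fun x => Real.exp |x|) (gaussianReal 0 1) := by
  rw [gaussianReal_of_var_ne_zero 0 one_ne_zero,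
    integrable_withDensity_iff (measurable_gaussianPDF 0 1)
      (ae_of_all _ fun x => ENNReal.ofReal_lt_top)]
  have hint1 : Integrable (fun x : ℝ => Real.exp (-(1/2 : ℝ) * (x - 1)^2)) := by
    exact (integrable_exp_neg_mul_sq (by norm_num : (0:ℝ) < 1/2)).comp_sub_right 1
  have hint2 : Integrable (fun x : ℝ => Real.exp (-(1/2 : ℝ) * (x + 1)^2)) := by
    have := (integrable_exp_neg_mul_sq (by norm_num : (0:ℝ) < 1/2)).comp_sub_right (-1)
    simpa [sub_neg_eq_add] using this
  refine Integrable.mono' (g := fun x => (Real.sqrt (2 * π))⁻¹ * Real.exp (1/2) *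
      (Real.exp (-(1/2:ℝ) * (x - 1)^2) + Real.exp (-(1/2:ℝ) * (x + 1)^2))) ?_ ?_ ?_
  · exact (hint1.add hint2).const_mul _
  · exact (measurable_abs.exp.mul
      ((measurable_gaussianPDF 0 1).ennreal_toReal)).aestronglyMeasurable
  · refine ae_of_all _ fun x => ?_
    have hpdf : (gaussianPDF 0 1 x).toReal = gaussianPDFReal 0 1 x :=
      ENNReal.toReal_ofReal (gaussianPDFReal_nonneg 0 1 x)
    have hpdf' : gaussianPDFReal 0 1 x = (Real.sqrt (2 * π))⁻¹ * Real.exp (-x^2 / 2) := by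
      simp [gaussianPDFReal]
    have hnn : (0:ℝ) ≤ Real.exp |x| * (gaussianPDF 0 1 x).toReal := by
      have := ENNReal.toReal_nonneg (a := gaussianPDF 0 1 x)
      positivity
    rw [Real.norm_eq_abs, abs_of_nonneg hnn, hpdf, hpdf']
    have habs : Real.exp |x| ≤ Real.exp x + Real.exp (-x) := by
      rcases abs_cases x with ⟨h, _⟩ | ⟨h, _⟩ <;> rw [h]
      · linarith [Real.exp_pos (-x)]
      · linarith [Real.exp_pos x]
    have e1 : Real.exp x * Real.exp (-x^2 / 2) =
        Real.exp (1/2) * Real.exp (-(1/2:ℝ) * (x - 1)^2) := by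
      rw [← Real.exp_add, ← Real.exp_add]; congr 1; ring
    have e2 : Real.exp (-x) * Real.exp (-x^2 / 2) =
        Real.exp (1/2) * Real.exp (-(1/2:ℝ) * (x + 1)^2) := by
      rw [← Real.exp_add, ← Real.exp_add]; congr 1; ring
    have hs : (0:ℝ) ≤ (Real.sqrt (2 * π))⁻¹ := by positivity
    have hmul : Real.exp |x| * Real.exp (-x^2/2) ≤
        (Real.exp x + Real.exp (-x)) * Real.exp (-x^2/2) :=
      mul_le_mul_of_nonneg_right habs (Real.exp_pos _).le
    calc Real.exp |x| * ((Real.sqrt (2 * π))⁻¹ * Real.exp (-x^2 / 2))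
        = (Real.sqrt (2 * π))⁻¹ * (Real.exp |x| * Real.exp (-x^2 / 2)) := by ring
      _ ≤ (Real.sqrt (2 * π))⁻¹ * ((Real.exp x + Real.exp (-x)) * Real.exp (-x^2 / 2)) :=
          mul_le_mul_of_nonneg_left hmul hs
      _ = (Real.sqrt (2 * π))⁻¹ * Real.exp (1/2) *
          (Real.exp (-(1/2:ℝ) * (x - 1)^2) + Real.exp (-(1/2:ℝ) * (x + 1)^2)) := by
          rw [add_mul, e1, e2]; ring

theorem stmt19 (κ : ℝ) (hκ : κ ∈ Set.Ioo (0 : ℝ) 1) :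
    ∃ ε : ℝ, 0 < ε ∧
      ∀ d : ℝ, 0 < d → ∀ σ : ℝ, 0 < σ → σ ≤ ε * d →
      ∀ (Ω : Type) (_ : MeasurableSpace Ω) (P : Measure Ω), IsProbabilityMeasure P →
      ∀ ξ : ℕ → Ω → ℝ, (∀ i, Measurable (ξ i)) →
        iIndepFun ξ P →
        (∀ i, Measure.map (ξ i) P = gaussianReal 0 1) →
        ∀ N : ℕ, 1 ≤ N →
          P {ω | (((Finset.range (3 * N + 1)).filter
              (fun m => |oscWalk Ω d σ 0 ξ m ω| ≤ d)).card : ℝ) < (N : ℝ) / 7} ≤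
            ENNReal.ofReal (κ ^ N) := by
  obtain ⟨hκ0, hκ1⟩ := hκ
  set Cγ : ℝ := ∫ x, Real.exp |x| ∂(gaussianReal 0 1) with hCγ
  have hCγ0 : 0 ≤ Cγ := integral_nonneg fun x => (Real.exp_pos _).le
  set K0 : ℝ := max Cγ 1 with hK0
  have hK1 : (1:ℝ) ≤ K0 := le_max_right _ _
  have hCK : Cγ ≤ K0 := le_max_left _ _
  have hK0pos : (0:ℝ) < K0 := lt_of_lt_of_le one_pos hK1
  have h14 : (1:ℝ) ≤ K0 ^ 4 := by
    calc (1:ℝ) = 1 ^ 4 := by norm_num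
      _ ≤ K0 ^ 4 := pow_le_pow_left₀ (by norm_num) hK1 4
  have hratio : (1:ℝ) < K0 ^ 4 / κ := by
    rw [lt_div_iff₀ hκ0, one_mul]
    exact lt_of_lt_of_le hκ1 h14
  set L : ℝ := Real.log (K0 ^ 4 / κ) with hL
  have hLpos : 0 < L := Real.log_pos hratio
  refine ⟨(L + 1)⁻¹, by positivity, ?_⟩
  intro d hd σ hσ hσε Ω mΩ P hP ξ hmeas h_indep hmap N hN
  have hσε' : (L + 1) * σ ≤ d := by
    have h := mul_le_mul_of_nonneg_left hσε (by positivity : (0:ℝ) ≤ L + 1)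
    rwa [← mul_assoc, mul_inv_cancel₀ (by positivity : (0:ℝ) < L + 1).ne', one_mul] at h
  -- the absolute values of the noise
  set X : ℕ → Ω → ℝ := fun i ω => |ξ i ω| with hX
  have hXmeas : ∀ i, Measurable (X i) := fun i => (hmeas i).abs
  have hXindep : iIndepFun X P :=
    h_indep.comp (fun _ => fun x : ℝ => |x|) (fun _ => measurable_abs)
  set s : Finset ℕ := Finset.Ico 1 (3 * N + 2) with hs
  have hscard : s.card = 3 * N + 1 := by simp [hs]
  -- integrability of exp of each |ξ i|
  have hint : ∀ i, Integrable (fun ω => Real.exp (1 * X i ω)) P := by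
    intro i
    have h1 : Integrable (fun x : ℝ => Real.exp |x|) (Measure.map (ξ i) P) := by
      rw [hmap i]; exact integrable_exp_abs_gaussian
    have h2 := (integrable_map_measure
      (measurable_abs.exp.aestronglyMeasurable) (hmeas i).aemeasurable).mp h1
    simpa [hX, Function.comp_def] using h2
  have hintsum : Integrable (fun ω => Real.exp (1 * (∑ i ∈ s, X i) ω)) P :=
    hXindep.integrable_exp_mul_sum hXmeas (fun i _ => hint i)
  -- value of each mgf
  have hmgf : ∀ i, mgf (X i) P 1 = Cγ := by
    intro i
    have h2 : ∫ x, Real.exp |x| ∂(Measure.map (ξ i) P) = ∫ ω, Real.exp |ξ i ω| ∂P :=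
      integral_map (hmeas i).aemeasurable (measurable_abs.exp.aestronglyMeasurable)
    rw [hCγ, ← hmap i, h2, mgf]
    simp [hX]
  -- Chernoff bound
  have hchern := measure_ge_le_exp_mul_mgf (X := ∑ i ∈ s, X i) (μ := P)
    ((L + 1) * N) zero_le_one hintsum
  have hmgfsum : mgf (∑ i ∈ s, X i) P 1 = Cγ ^ (3 * N + 1) := by
    rw [hXindep.mgf_sum hXmeas s, Finset.prod_congr rfl (fun i _ => hmgf i),
      Finset.prod_const, hscard]
  -- numeric bound
  have hkey : Real.exp (-1 * ((L + 1) * N)) * Cγ ^ (3 * N + 1) ≤ κ ^ N := by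
    have h1 : Cγ ^ (3 * N + 1) ≤ K0 ^ (4 * N) := by
      calc Cγ ^ (3 * N + 1) ≤ K0 ^ (3 * N + 1) := pow_le_pow_left₀ hCγ0 hCK _
        _ ≤ K0 ^ (4 * N) := pow_le_pow_right₀ hK1 (by omega)
    have h2 : Real.exp (-1 * ((L + 1) * N)) = Real.exp (-(L + 1)) ^ N := by
      rw [← Real.exp_nat_mul]; congr 1; ring
    have h3 : Real.exp (-(L + 1)) * K0 ^ 4 ≤ κ := by
      have hle : Real.exp (-(L + 1)) ≤ Real.exp (-L) :=
        Real.exp_le_exp.mpr (by linarith)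
      have heL : Real.exp (-L) = κ / K0 ^ 4 := by
        rw [Real.exp_neg, hL, Real.exp_log (by positivity)]
        field_simp
      calc Real.exp (-(L + 1)) * K0 ^ 4 ≤ Real.exp (-L) * K0 ^ 4 := by
            exact mul_le_mul_of_nonneg_right hle (by positivity)
        _ = κ := by rw [heL]; field_simp
    calc Real.exp (-1 * ((L + 1) * N)) * Cγ ^ (3 * N + 1)
        ≤ Real.exp (-1 * ((L + 1) * N)) * K0 ^ (4 * N) :=
          mul_le_mul_of_nonneg_left h1 (Real.exp_pos _).le
      _ = (Real.exp (-(L + 1)) * K0 ^ 4) ^ N := by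
          rw [h2, pow_mul, ← mul_pow]
      _ ≤ κ ^ N := pow_le_pow_left₀ (by positivity) h3 N
  -- event inclusion
  have hsub : {ω | (((Finset.range (3 * N + 1)).filter
        (fun m => |oscWalk Ω d σ 0 ξ m ω| ≤ d)).card : ℝ) < (N : ℝ) / 7} ⊆
      {ω | (L + 1) * N ≤ (∑ i ∈ s, X i) ω} := by
    intro ω hω
    simp only [Set.mem_setOf_eq] at hω ⊢
    have hdet := oscWalk_det d σ hd hσ Ω ξ ω (3 * N + 1)
    have hsum : (∑ i ∈ s, X i) ω = ∑ i ∈ Finset.range (3 * N + 1), |ξ (i + 1) ω| := by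
      rw [Finset.sum_apply, hs, Finset.sum_Ico_eq_sum_range]
      have h32 : 3 * N + 2 - 1 = 3 * N + 1 := by omega
      rw [h32]
      exact Finset.sum_congr rfl fun i _ => by rw [hX]; rw [add_comm]
    rw [hsum]
    set S : ℝ := ∑ i ∈ Finset.range (3 * N + 1), |ξ (i + 1) ω| with hS
    set c : ℝ := (((Finset.range (3 * N + 1)).filter
      (fun m => |oscWalk Ω d σ 0 ξ m ω| ≤ d)).card : ℝ)
    have habs0 : (0:ℝ) ≤ |oscWalk Ω d σ 0 ξ (3 * N + 1) ω| := abs_nonneg _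
    have hdet' : d * ((3 * N  : ℕ) + 1 : ℝ) ≤ 2 * d * c + 2 * σ * S := by
      push_cast at hdet ⊢
      linarith
    have hN1 : (1:ℝ) ≤ (N : ℝ) := by exact_mod_cast hN
    push_cast at hdet'
    nlinarith [mul_pos hσ (lt_of_lt_of_le one_pos hN1), mul_le_mul_of_nonneg_right hσε'
      (le_trans zero_le_one hN1 : (0:ℝ) ≤ (N:ℝ)), mul_lt_mul_of_pos_left hω
      (by positivity : (0:ℝ) < 2 * d)]
  -- conclude
  have hne : P {ω | (L + 1) * N ≤ (∑ i ∈ s, X i) ω} ≠ ⊤ := measure_ne_top _ _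
  calc P {ω | (((Finset.range (3 * N + 1)).filter
        (fun m => |oscWalk Ω d σ 0 ξ m ω| ≤ d)).card : ℝ) < (N : ℝ) / 7}
      ≤ P {ω | (L + 1) * N ≤ (∑ i ∈ s, X i) ω} := measure_mono hsub
    _ ≤ ENNReal.ofReal (κ ^ N) := by
        rw [← ENNReal.ofReal_toReal hne]
        exact ENNReal.ofReal_le_ofReal (le_trans (hchern.trans (by rw [hmgfsum])) hkey)
end
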